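/- Let Ω=(0,∞), w(x)=(1−2|x−1/2|)₊ and f(x)=(1−x)₊, and let Π be the set of probability measures π on Ω with ∫w dπ ≤ 0. Then Π = {π : π((0,1))=0}, sup_{π∈Π}∫f dπ = 0, while inf{x∈ℝ : there exists α≥0 such that x+αw(·) ≥ f(·) pointwise on Ω} = 1. In particular, there is a duality gap when the no-arbitrage condition of the auxiliary duality lemma fails. -/

import Mathlib

open MeasureTheory Set Filter

noncomputable section

/-- Butterfly payoff `w(x) = (1 - 2|x - 1/2|)₊`. -/
def wBfly (x : ℝ) : ℝ := max (1 - 2 * |x - 1 / 2|) 0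

/-- Put payoff `f(x) = (1 - x)₊`. -/
def fPut (x : ℝ) : ℝ := max (1 - x) 0

/-- The set `Π` of probability measures on `Ω = (0,∞)` with `∫ w dπ ≤ 0`
(modelled as measures on `ℝ` concentrated on `(0,∞)`). -/
def PiSet : Set (Measure ℝ) :=
  {π | IsProbabilityMeasure π ∧ π (Set.Ioi (0 : ℝ))ᶜ = 0 ∧ (∫ x, wBfly x ∂π) ≤ 0}

lemma wBfly_cont : Continuous wBfly := by
  unfold wBfly; continuity

lemma wBfly_nonneg (x : ℝ) : 0 ≤ wBfly x := le_max_right _ _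

lemma wBfly_le_one (x : ℝ) : wBfly x ≤ 1 := by
  unfold wBfly
  have := abs_nonneg (x - 1/2)
  exact max_le (by linarith) zero_le_one

lemma wBfly_ne_zero {x : ℝ} (h : wBfly x ≠ 0) : x ∈ Ioo (0:ℝ) 1 := by
  unfold wBfly at h
  rcases le_or_gt (1 - 2*|x-1/2|) 0 with h1 | h1
  · exact absurd (max_eq_right h1) h
  · have h2 : |x - 1/2| < 1/2 := by linarith
    rw [abs_lt] at h2
    exact ⟨by linarith [h2.1], by linarith [h2.2]⟩

lemma wBfly_pos {x : ℝ} (hx : x ∈ Ioo (0:ℝ) 1) : 0 < wBfly x := by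
  have h2 : |x - 1/2| < 1/2 := abs_lt.2 ⟨by linarith [hx.1], by linarith [hx.2]⟩
  exact lt_max_iff.2 (Or.inl (by linarith))

lemma wBfly_integrable (π : Measure ℝ) [IsProbabilityMeasure π] :
    Integrable wBfly π := by
  refine Integrable.mono' (integrable_const 1) wBfly_cont.aestronglyMeasurable ?_
  filter_upwards with x
  rw [Real.norm_eq_abs, abs_of_nonneg (wBfly_nonneg x)]
  exact wBfly_le_one x

lemma piSet_eq : PiSet = {π : Measure ℝ | IsProbabilityMeasure π ∧
    π (Set.Ioi (0 : ℝ))ᶜ = 0 ∧ π (Set.Ioo (0 : ℝ) 1) = 0} := by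
  ext π
  simp only [PiSet, mem_setOf_eq]
  constructor
  · rintro ⟨hp, h0, hw⟩
    refine ⟨hp, h0, ?_⟩
    have : IsProbabilityMeasure π := hp
    have heq : ∫ x, wBfly x ∂π = 0 :=
      le_antisymm hw (integral_nonneg wBfly_nonneg)
    have hae : wBfly =ᵐ[π] 0 :=
      (integral_eq_zero_iff_of_nonneg wBfly_nonneg (wBfly_integrable π)).1 heq
    have hz : π {x | wBfly x ≠ 0} = 0 := by
      have := hae
      rw [EventuallyEq, ae_iff] at this
      simpa using this
    exact measure_mono_null (fun x hx => (wBfly_pos hx).ne') hz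
  · rintro ⟨hp, h0, h1⟩
    refine ⟨hp, h0, le_of_eq ?_⟩
    have hae : wBfly =ᵐ[π] 0 := by
      rw [EventuallyEq, ae_iff]
      exact measure_mono_null (fun x hx => wBfly_ne_zero hx) h1
    rw [integral_congr_ae hae]; simp

lemma sup_set_eq : {y : ℝ | ∃ π ∈ PiSet, y = ∫ x, fPut x ∂π} = {0} := by
  ext y
  simp only [mem_setOf_eq, mem_singleton_iff]
  constructor
  · rintro ⟨π, hπ, rfl⟩
    rw [piSet_eq] at hπ
    obtain ⟨hp, h0, h1⟩ := hπ
    have hIio : π (Iio (1:ℝ)) = 0 := by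
      have hsub : Iio (1:ℝ) ⊆ (Ioi (0:ℝ))ᶜ ∪ Ioo 0 1 := by
        intro x hx
        rcases le_or_gt x 0 with h | h
        · exact Or.inl (by simpa using h)
        · exact Or.inr ⟨h, hx⟩
      exact measure_mono_null hsub (measure_union_null h0 h1)
    have hae : fPut =ᵐ[π] 0 := by
      rw [EventuallyEq, ae_iff]
      refine measure_mono_null (fun x hx => ?_) hIio
      simp only [Pi.zero_apply, mem_setOf_eq] at hx
      by_contra hge
      simp only [mem_Iio, not_lt] at hge ⊢
      exact hx (max_eq_right (by linarith))
    rw [integral_congr_ae hae]; simp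
  · rintro rfl
    refine ⟨Measure.dirac 1, ⟨inferInstance, ?_, ?_⟩, ?_⟩
    · rw [Measure.dirac_apply' _ measurableSet_Ioi.compl]
      simp
    · rw [integral_dirac]
      unfold wBfly
      rw [show |(1:ℝ) - 1/2| = 1/2 from by rw [abs_of_nonneg] <;> norm_num]
      norm_num
    · rw [integral_dirac]
      unfold fPut
      norm_num

lemma one_mem_inf : (1:ℝ) ∈ {x : ℝ | ∃ α : ℝ, 0 ≤ α ∧
    ∀ y : ℝ, 0 < y → fPut y ≤ x + α * wBfly y} := by
  refine ⟨0, le_refl 0, fun y hy => ?_⟩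
  unfold fPut
  rw [zero_mul, add_zero]
  exact max_le (by linarith) zero_le_one

lemma inf_lower {x : ℝ} (hx : x ∈ {x : ℝ | ∃ α : ℝ, 0 ≤ α ∧
    ∀ y : ℝ, 0 < y → fPut y ≤ x + α * wBfly y}) : 1 ≤ x := by
  obtain ⟨α, hα, h⟩ := hx
  by_contra hlt
  push_neg at hlt
  set y : ℝ := min (1/2) ((1-x)/(2*(1+2*α))) with hy
  have hden : (0:ℝ) < 2*(1+2*α) := by positivity
  have hy0 : 0 < y := lt_min (by norm_num) (div_pos (by linarith) hden)
  have hy2 : y ≤ 1/2 := min_le_left _ _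
  have hw : wBfly y = 2*y := by
    unfold wBfly
    rw [abs_of_nonpos (by linarith), max_eq_left (by linarith)]
    ring
  have hf : fPut y = 1 - y := max_eq_left (by linarith)
  have hc := h y hy0
  rw [hf, hw] at hc
  have hyb : y * (2*(1+2*α)) ≤ 1 - x :=
    (le_div_iff₀ hden).1 (min_le_right _ _)
  nlinarith

/-- Counterexample showing the necessity of the no-arbitrage condition in the
auxiliary duality lemma: `Π = {π : π((0,1)) = 0}`, `sup_{π∈Π} ∫ f dπ = 0`, while
the cheapest superhedging constant equals `1`; in particular there is a duality
gap. -/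
theorem duality_gap_example :
    PiSet = {π : Measure ℝ | IsProbabilityMeasure π ∧ π (Set.Ioi (0 : ℝ))ᶜ = 0 ∧
        π (Set.Ioo (0 : ℝ) 1) = 0} ∧
    sSup {y : ℝ | ∃ π ∈ PiSet, y = ∫ x, fPut x ∂π} = 0 ∧
    sInf {x : ℝ | ∃ α : ℝ, 0 ≤ α ∧ ∀ y : ℝ, 0 < y → fPut y ≤ x + α * wBfly y} = 1 := by
  refine ⟨piSet_eq, ?_, ?_⟩
  · rw [sup_set_eq, csSup_singleton]
  · exact le_antisymm (csInf_le ⟨1, fun x hx => inf_lower hx⟩ one_mem_inf)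
      (le_csInf ⟨1, one_mem_inf⟩ fun x hx => inf_lower hx)
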